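/- There exist constants K > 0 and δ₀ ∈ (0, min(π, 1−π)) such that for all δ ∈ (0, δ₀] and all η, β, μ with |η| ≤ δ, |β| ≤ δ, |μ| ≤ δ, setting ρ = π + η and α = log(ρ/(1−ρ)), the function d₀₁(α,β) = −π·E[(μ + Z)·(1 + exp(α + βμ + βZ))⁻¹] − (1 − π)·E[Z·(1 + exp(α + βZ))⁻¹] satisfies |d₀₁(α,β) − [−π(1−π)μ + ηπμ + {π(1−π) + (1−2π)η}β·E(Z²) − π(1−π)(π − ½)β²·E(Z³)]| ≤ Kδ³. -/

import Mathlib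

open MeasureTheory Real Set

noncomputable def qsig (x : ℝ) : ℝ := (1 + Real.exp x)⁻¹

lemma qsig_den_pos (x : ℝ) : 0 < 1 + Real.exp x := by positivity

lemma qsig_pos (x : ℝ) : 0 < qsig x := by
  unfold qsig; positivity

lemma qsig_le_one (x : ℝ) : qsig x ≤ 1 := by
  unfold qsig
  rw [inv_le_one_iff₀]
  right; linarith [Real.exp_pos x]

lemma hasDerivAt_qsig (x : ℝ) : HasDerivAt qsig (qsig x ^ 2 - qsig x) x := by
  have h : HasDerivAt (fun x => 1 + Real.exp x) (Real.exp x) x :=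
    (Real.hasDerivAt_exp x).const_add 1
  have h2 := h.inv (ne_of_gt (qsig_den_pos x))
  refine h2.congr_deriv ?_
  unfold qsig
  have := (qsig_den_pos x).ne'
  field_simp
  ring

lemma hasDerivAt_q1 (x : ℝ) :
    HasDerivAt (fun x => qsig x ^ 2 - qsig x) ((2 * qsig x - 1) * (qsig x ^ 2 - qsig x)) x := by
  have h := ((hasDerivAt_qsig x).pow 2).sub (hasDerivAt_qsig x)
  exact h.congr_deriv (by ring)

lemma hasDerivAt_q2 (x : ℝ) :
    HasDerivAt (fun x => (2 * qsig x - 1) * (qsig x ^ 2 - qsig x))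
      ((qsig x ^ 2 - qsig x) * (6 * qsig x ^ 2 - 6 * qsig x + 1)) x := by
  have h := (((hasDerivAt_qsig x).const_mul 2).sub_const 1).mul (hasDerivAt_q1 x)
  exact h.congr_deriv (by ring)

lemma q3_bound (x : ℝ) :
    |(qsig x ^ 2 - qsig x) * (6 * qsig x ^ 2 - 6 * qsig x + 1)| ≤ 13 := by
  have h1 := qsig_pos x
  have h2 := qsig_le_one x
  rw [abs_mul]
  have b1 : |qsig x ^ 2 - qsig x| ≤ 1 := by
    rw [abs_le]; constructor <;> nlinarith
  have b2 : |6 * qsig x ^ 2 - 6 * qsig x + 1| ≤ 13 := by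
    rw [abs_le]; constructor <;> nlinarith
  nlinarith [abs_nonneg (qsig x ^ 2 - qsig x), abs_nonneg (6 * qsig x ^ 2 - 6 * qsig x + 1)]
lemma step_bound {f g : ℝ → ℝ} (hd : ∀ x, HasDerivAt f (g x) x) (hf0 : f 0 = 0)
    {C : ℝ} (hC : 0 ≤ C) {n : ℕ} (hg : ∀ x, |g x| ≤ C * |x| ^ n) (t : ℝ) :
    |f t| ≤ C * |t| ^ (n + 1) := by
  have hs : Convex ℝ (Icc (-|t|) |t|) := convex_Icc _ _
  have h0 : (0 : ℝ) ∈ Icc (-|t|) |t| := by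
    constructor <;> simp [abs_nonneg, neg_nonpos]
  have ht : t ∈ Icc (-|t|) |t| := by
    constructor
    · linarith [neg_abs_le t]
    · exact le_abs_self t
  have key := hs.norm_image_sub_le_of_norm_hasDerivWithin_le
    (f' := g) (C := C * |t| ^ n)
    (fun x _ => (hd x).hasDerivWithinAt)
    (fun x hx => by
      have hxle : |x| ≤ |t| := abs_le.mpr ⟨hx.1, hx.2⟩
      calc ‖g x‖ = |g x| := rfl
        _ ≤ C * |x| ^ n := hg x
        _ ≤ C * |t| ^ n := by
            apply mul_le_mul_of_nonneg_left _ hC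
            exact pow_le_pow_left₀ (abs_nonneg x) hxle n)
    h0 ht
  simp only [Real.norm_eq_abs, hf0, sub_zero] at key
  calc |f t| ≤ C * |t| ^ n * |t| := key
    _ = C * |t| ^ (n + 1) := by ring

set_option linter.unusedVariables false in
lemma qsig_taylor (a t : ℝ) :
    |qsig (a + t) - (qsig a + (qsig a ^ 2 - qsig a) * t
      + (2 * qsig a - 1) * (qsig a ^ 2 - qsig a) * t ^ 2 / 2)| ≤ 13 * |t| ^ 3 := by
  set q1 : ℝ → ℝ := fun x => qsig x ^ 2 - qsig x with hq1def
  set q2 : ℝ → ℝ := fun x => (2 * qsig x - 1) * (qsig x ^ 2 - qsig x) with hq2def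
  have h2 : ∀ s : ℝ, |q2 (a + s) - q2 a| ≤ 13 * |s| ^ (0 + 1) := by
    apply step_bound (g := fun s => (qsig (a+s) ^ 2 - qsig (a+s)) * (6 * qsig (a+s) ^ 2 - 6 * qsig (a+s) + 1))
    · intro x
      have hinner : HasDerivAt (fun s : ℝ => a + s) 1 x := (hasDerivAt_id x).const_add a
      have := (hasDerivAt_q2 (a + x)).comp x hinner
      simpa using this.sub_const (q2 a)
    · simp
    · norm_num
    · intro x; simpa using q3_bound (a + x)
  have h1 : ∀ s : ℝ, |q1 (a + s) - q1 a - q2 a * s| ≤ 13 * |s| ^ (1 + 1) := by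
    apply step_bound (g := fun s => q2 (a + s) - q2 a)
    · intro x
      have hinner : HasDerivAt (fun s : ℝ => a + s) 1 x := (hasDerivAt_id x).const_add a
      have hc := (hasDerivAt_q1 (a + x)).comp x hinner
      have : HasDerivAt (fun s => q1 (a + s) - q1 a - q2 a * s) (q2 (a + x) * 1 - q2 a) x := by
        have hl : HasDerivAt (fun s : ℝ => q2 a * s) (q2 a) x := by
          simpa using (hasDerivAt_id x).const_mul (q2 a)
        exact ((hc.sub_const (q1 a)).sub hl)
      simpa using this
    · simp
    · norm_num
    · intro x; simpa using h2 x
  have h0 : ∀ s : ℝ, |qsig (a + s) - qsig a - q1 a * s - q2 a * s ^ 2 / 2| ≤ 13 * |s| ^ (2 + 1) := by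
    apply step_bound (g := fun s => q1 (a + s) - q1 a - q2 a * s)
    · intro x
      have hinner : HasDerivAt (fun s : ℝ => a + s) 1 x := (hasDerivAt_id x).const_add a
      have hc := (hasDerivAt_qsig (a + x)).comp x hinner
      have hl : HasDerivAt (fun s : ℝ => q1 a * s) (q1 a) x := by
        simpa using (hasDerivAt_id x).const_mul (q1 a)
      have hsq : HasDerivAt (fun s : ℝ => q2 a * s ^ 2 / 2) (q2 a * x) x := by
        have := ((hasDerivAt_pow 2 x).const_mul (q2 a)).div_const 2
        simpa using this.congr_deriv (by push_cast; ring)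
      have := ((hc.sub_const (qsig a)).sub hl).sub hsq
      exact this.congr_deriv (by simp only [hq1def]; ring)
    · simp
    · norm_num
    · intro x; simpa using h1 x
  calc |qsig (a + t) - (qsig a + q1 a * t + q2 a * t ^ 2 / 2)|
      = |qsig (a + t) - qsig a - q1 a * t - q2 a * t ^ 2 / 2| := by ring_nf
    _ ≤ 13 * |t| ^ 3 := h0 t

lemma abs_le_one_add_pow4 (z : ℝ) : |z| ≤ 1 + z ^ 4 := by
  have h4 : (0:ℝ) ≤ z ^ 4 := by positivity
  rcases le_total (|z|) 1 with h | h
  · linarith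
  · have : |z| ≤ |z| ^ 4 := by
      calc |z| = |z| ^ 1 := (pow_one _).symm
        _ ≤ |z| ^ 4 := pow_le_pow_right₀ h (by norm_num)
    have h5 : |z| ^ 4 = z ^ 4 := by rw [← abs_pow, abs_of_nonneg (by positivity)]
    linarith

lemma sq_le_one_add_pow4 (z : ℝ) : z ^ 2 ≤ 1 + z ^ 4 := by
  nlinarith [sq_nonneg (z ^ 2 - 1)]

lemma abs_cube_le_one_add_pow4 (z : ℝ) : |z ^ 3| ≤ 1 + z ^ 4 := by
  have h : |z ^ 3| = |z| ^ 3 := by rw [abs_pow]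
  have h4 : (0:ℝ) ≤ z ^ 4 := by positivity
  rcases le_total (|z|) 1 with hz | hz
  · have : |z| ^ 3 ≤ 1 := pow_le_one₀ (abs_nonneg z) hz
    linarith
  · have hle : |z| ^ 3 ≤ |z| ^ 4 := pow_le_pow_right₀ hz (by norm_num)
    have h5 : |z| ^ 4 = z ^ 4 := by rw [← abs_pow, abs_of_nonneg (by positivity)]
    linarith

lemma expand_int {Ω : Type*} [MeasurableSpace Ω] (P : Measure Ω) [IsProbabilityMeasure P]
    (Z : Ω → ℝ) (hZmeas : Measurable Z)
    (hZmom : Integrable (fun ω => (Z ω) ^ 4) P)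
    (hZmean : ∫ ω, Z ω ∂P = 0) (m a b : ℝ) :
    |(∫ ω, (m + Z ω) * qsig (a + b * (m + Z ω)) ∂P)
      - (qsig a * m + (qsig a ^ 2 - qsig a) * b * (m ^ 2 + ∫ ω, (Z ω) ^ 2 ∂P)
        + (2 * qsig a - 1) * (qsig a ^ 2 - qsig a) * b ^ 2 / 2
            * (m ^ 3 + 3 * m * (∫ ω, (Z ω) ^ 2 ∂P) + ∫ ω, (Z ω) ^ 3 ∂P))|
      ≤ 104 * |b| ^ 3 * (m ^ 4 + ∫ ω, (Z ω) ^ 4 ∂P) := by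
  have hdom : Integrable (fun ω => 1 + (Z ω) ^ 4) P := (integrable_const 1).add hZmom
  have intZ : Integrable Z P :=
    hdom.mono' hZmeas.aestronglyMeasurable
      (ae_of_all _ fun ω => by simpa using abs_le_one_add_pow4 (Z ω))
  have intZ2 : Integrable (fun ω => (Z ω) ^ 2) P :=
    hdom.mono' (hZmeas.pow_const 2).aestronglyMeasurable
      (ae_of_all _ fun ω => by
        rw [Real.norm_eq_abs, abs_of_nonneg (by positivity)]
        exact sq_le_one_add_pow4 (Z ω))
  have intZ3 : Integrable (fun ω => (Z ω) ^ 3) P :=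
    hdom.mono' (hZmeas.pow_const 3).aestronglyMeasurable
      (ae_of_all _ fun ω => by simpa using abs_cube_le_one_add_pow4 (Z ω))
  set M2 := ∫ ω, (Z ω) ^ 2 ∂P with hM2
  set M3 := ∫ ω, (Z ω) ^ 3 ∂P with hM3
  set M4 := ∫ ω, (Z ω) ^ 4 ∂P with hM4
  set c0 := qsig a with hc0
  set c1 := qsig a ^ 2 - qsig a with hc1
  set c2 := (2 * qsig a - 1) * (qsig a ^ 2 - qsig a) with hc2
  set A := c0 * m + c1 * b * m ^ 2 + c2 * b ^ 2 / 2 * m ^ 3 with hA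
  set B := c0 + 2 * c1 * b * m + 3 * c2 * b ^ 2 / 2 * m ^ 2 with hB
  set C := c1 * b + 3 * c2 * b ^ 2 / 2 * m with hC
  set D := c2 * b ^ 2 / 2 with hD
  set g : Ω → ℝ := fun ω => A + B * Z ω + C * (Z ω) ^ 2 + D * (Z ω) ^ 3 with hgdef
  have h12 : Integrable (fun ω => A + B * Z ω) P := (integrable_const A).add (intZ.const_mul B)
  have h123 : Integrable (fun ω => A + B * Z ω + C * (Z ω) ^ 2) P :=
    h12.add (intZ2.const_mul C)
  have intg : Integrable g P := h123.add (intZ3.const_mul D)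
  have hgint : ∫ ω, g ω ∂P = A + C * M2 + D * M3 := by
    calc ∫ ω, g ω ∂P
        = (∫ ω, A + B * Z ω + C * (Z ω) ^ 2 ∂P) + ∫ ω, D * (Z ω) ^ 3 ∂P :=
          integral_add h123 (intZ3.const_mul D)
      _ = ((∫ ω, A + B * Z ω ∂P) + ∫ ω, C * (Z ω) ^ 2 ∂P) + ∫ ω, D * (Z ω) ^ 3 ∂P := by
          rw [integral_add h12 (intZ2.const_mul C)]
      _ = (((∫ ω, (A:ℝ) ∂P) + ∫ ω, B * Z ω ∂P) + ∫ ω, C * (Z ω) ^ 2 ∂P)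
            + ∫ ω, D * (Z ω) ^ 3 ∂P := by
          rw [integral_add (integrable_const A) (intZ.const_mul B)]
      _ = A + C * M2 + D * M3 := by
          rw [integral_const_mul, integral_const_mul, integral_const_mul, integral_const,
            hZmean, ← hM2, ← hM3]
          simp
  have hqcont : Continuous qsig := by
    unfold qsig
    exact (continuous_const.add Real.continuous_exp).inv₀ fun x => (qsig_den_pos x).ne'
  set f : Ω → ℝ := fun ω => (m + Z ω) * qsig (a + b * (m + Z ω)) with hfdef
  have hfmeas : Measurable f := by
    apply (measurable_const.add hZmeas).mul
    exact hqcont.measurable.comp (measurable_const.add ((measurable_const.add hZmeas).const_mul b))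
  have intf : Integrable f P := by
    apply ((integrable_const (|m|)).add intZ.abs).mono' hfmeas.aestronglyMeasurable
    refine ae_of_all _ fun ω => ?_
    simp only [hfdef, Real.norm_eq_abs, abs_mul]
    calc |m + Z ω| * |qsig (a + b * (m + Z ω))| ≤ |m + Z ω| * 1 := by
          apply mul_le_mul_of_nonneg_left _ (abs_nonneg _)
          rw [abs_of_pos (qsig_pos _)]
          exact qsig_le_one _
      _ ≤ |m| + |Z ω| := by rw [mul_one]; exact abs_add_le m (Z ω)
  have hpt : ∀ ω, |f ω - g ω| ≤ 104 * |b| ^ 3 * (m ^ 4 + (Z ω) ^ 4) := by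
    intro ω
    have hfg : f ω - g ω = (m + Z ω) * (qsig (a + b * (m + Z ω))
        - (c0 + c1 * (b * (m + Z ω)) + c2 * (b * (m + Z ω)) ^ 2 / 2)) := by
      simp only [hfdef, hgdef, hA, hB, hC, hD]
      ring
    rw [hfg, abs_mul]
    have htay := qsig_taylor a (b * (m + Z ω))
    rw [← hc0, ← hc1, ← hc2] at htay
    calc |m + Z ω| * |qsig (a + b * (m + Z ω))
          - (c0 + c1 * (b * (m + Z ω)) + c2 * (b * (m + Z ω)) ^ 2 / 2)|
        ≤ |m + Z ω| * (13 * |b * (m + Z ω)| ^ 3) :=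
          mul_le_mul_of_nonneg_left htay (abs_nonneg _)
      _ = 13 * |b| ^ 3 * |m + Z ω| ^ 4 := by rw [abs_mul]; ring
      _ = 13 * |b| ^ 3 * (m + Z ω) ^ 4 := by
          rw [show |m + Z ω| ^ 4 = (m + Z ω) ^ 4 by
            rw [← abs_pow, abs_of_nonneg (by positivity)]]
      _ ≤ 13 * |b| ^ 3 * (8 * (m ^ 4 + (Z ω) ^ 4)) := by
          apply mul_le_mul_of_nonneg_left _ (by positivity)
          nlinarith [sq_nonneg (m - Z ω), sq_nonneg (m + Z ω), sq_nonneg (m ^ 2 - (Z ω) ^ 2),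
            sq_nonneg (m ^ 2 + (Z ω) ^ 2), sq_nonneg (m * Z ω)]
      _ = 104 * |b| ^ 3 * (m ^ 4 + (Z ω) ^ 4) := by ring
  have hsub : (∫ ω, f ω ∂P) - ∫ ω, g ω ∂P = ∫ ω, (f ω - g ω) ∂P := (integral_sub intf intg).symm
  have hinth : Integrable (fun ω => 104 * |b| ^ 3 * (m ^ 4 + (Z ω) ^ 4)) P :=
    ((integrable_const (m ^ 4)).add hZmom).const_mul _
  have hb2 : ∀ᵐ ω ∂P, ‖f ω - g ω‖ ≤ 104 * |b| ^ 3 * (m ^ 4 + (Z ω) ^ 4) :=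
    ae_of_all _ fun ω => by rw [Real.norm_eq_abs]; exact hpt ω
  have hbound : |∫ ω, (f ω - g ω) ∂P| ≤ 104 * |b| ^ 3 * (m ^ 4 + M4) := by
    have hn := norm_integral_le_of_norm_le hinth hb2
    rw [Real.norm_eq_abs] at hn
    calc |∫ ω, (f ω - g ω) ∂P| ≤ ∫ ω, 104 * |b| ^ 3 * (m ^ 4 + (Z ω) ^ 4) ∂P := hn
      _ = 104 * |b| ^ 3 * (m ^ 4 + M4) := by
          rw [integral_const_mul, integral_add (integrable_const _) hZmom, integral_const, ← hM4]
          simp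
  have hgoal : (∫ ω, f ω ∂P)
      - (c0 * m + c1 * b * (m ^ 2 + M2) + c2 * b ^ 2 / 2 * (m ^ 3 + 3 * m * M2 + M3))
      = ∫ ω, (f ω - g ω) ∂P := by
    rw [← hsub, hgint, hA, hC, hD]
    ring
  calc |(∫ ω, f ω ∂P)
      - (c0 * m + c1 * b * (m ^ 2 + M2) + c2 * b ^ 2 / 2 * (m ^ 3 + 3 * m * M2 + M3))|
      = |∫ ω, (f ω - g ω) ∂P| := by rw [hgoal]
    _ ≤ 104 * |b| ^ 3 * (m ^ 4 + M4) := hbound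

lemma inner_bound {p η : ℝ} (hp0 : 0 < p) (hp1 : p < 1) (hη1 : -1 ≤ η) (hη2 : η ≤ 1) :
    |-3 * p ^ 2 - 3 * p * η - η ^ 2 + 3 * p + 3 / 2 * η - 1 / 2| ≤ 12 := by
  rw [abs_le]
  constructor <;> nlinarith [sq_nonneg p, sq_nonneg η, sq_nonneg (p + η), sq_nonneg (p - η)]

lemma mul_abs_le {a b x y : ℝ} (h1 : |a| ≤ x) (h2 : |b| ≤ y) : |a * b| ≤ x * y := by
  rw [abs_mul]; exact mul_le_mul h1 h2 (abs_nonneg _) ((abs_nonneg a).trans h1)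

lemma abs_add4 (a b c d : ℝ) : |a + b + c + d| ≤ |a| + |b| + |c| + |d| := by
  calc |a + b + c + d| ≤ |a + b + c| + |d| := abs_add_le _ _
    _ ≤ (|a + b| + |c|) + |d| := by gcongr; exact abs_add_le _ _
    _ ≤ ((|a| + |b|) + |c|) + |d| := by gcongr; exact abs_add_le _ _

set_option maxHeartbeats 4000000 in
/-- Expansion (6.8) for the `β`-derivative of the expected negative logistic
log-likelihood: with `ρ = π + η` and `α = log(ρ/(1−ρ))`,
`|d₀₁(α,β) − [−π(1−π)μ + ηπμ + {π(1−π) + (1−2π)η}β·E Z² − π(1−π)(π − ½)β²·E Z³]| ≤ Kδ³`,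
uniformly in `|η|, |β|, |μ| ≤ δ ≤ δ₀`. -/
theorem d01_expansion
    {Ω : Type*} [MeasurableSpace Ω] (P : Measure Ω) [IsProbabilityMeasure P]
    (Z : Ω → ℝ) (hZmeas : Measurable Z)
    (hZmom : Integrable (fun ω => (Z ω) ^ 4) P)
    (hZmean : ∫ ω, Z ω ∂P = 0)
    (p : ℝ) (hp : p ∈ Set.Ioo (0 : ℝ) 1) :
    ∃ K : ℝ, 0 < K ∧ ∃ δ₀ ∈ Set.Ioo (0 : ℝ) (min p (1 - p)),
      ∀ δ ∈ Set.Ioc (0 : ℝ) δ₀, ∀ η β μ : ℝ,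
        |η| ≤ δ → |β| ≤ δ → |μ| ≤ δ →
          |(-p * ∫ ω, (μ + Z ω) * (1 + Real.exp (Real.log ((p + η) / (1 - (p + η)))
                  + β * μ + β * Z ω))⁻¹ ∂P
              - (1 - p) * ∫ ω, Z ω * (1 + Real.exp (Real.log ((p + η) / (1 - (p + η)))
                  + β * Z ω))⁻¹ ∂P)
            - (-(p * (1 - p)) * μ + η * p * μ
                + (p * (1 - p) + (1 - 2 * p) * η) * β * (∫ ω, (Z ω) ^ 2 ∂P)
                - p * (1 - p) * (p - 1 / 2) * β ^ 2 * ∫ ω, (Z ω) ^ 3 ∂P)|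
          ≤ K * δ ^ 3 := by
  obtain ⟨hp0, hp1⟩ := hp
  set M2 := ∫ ω, (Z ω) ^ 2 ∂P with hM2
  set M3 := ∫ ω, (Z ω) ^ 3 ∂P with hM3
  set M4 := ∫ ω, (Z ω) ^ 4 ∂P with hM4
  have hM4nn : 0 ≤ M4 := integral_nonneg fun ω => by positivity
  have hM2A : |M2| ≤ 1 + M4 := by
    have hint : Integrable (fun ω => 1 + (Z ω) ^ 4) P := (integrable_const 1).add hZmom
    have hintZ2 : Integrable (fun ω => (Z ω) ^ 2) P :=
      hint.mono' ((hZmeas.pow_const 2).aestronglyMeasurable)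
        (ae_of_all _ fun ω => by
          rw [Real.norm_eq_abs, abs_of_nonneg (by positivity)]
          exact sq_le_one_add_pow4 (Z ω))
    have h1 : M2 ≤ 1 + M4 := by
      have := integral_mono hintZ2 hint (fun ω => sq_le_one_add_pow4 (Z ω))
      rw [integral_add (integrable_const 1) hZmom, integral_const] at this
      simpa [← hM2, ← hM4] using this
    have h2 : 0 ≤ M2 := integral_nonneg fun ω => by positivity
    rw [abs_of_nonneg h2]; exact h1
  have hM3A : |M3| ≤ 1 + M4 := by
    have := norm_integral_le_of_norm_le (f := fun ω => (Z ω) ^ 3)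
      ((integrable_const 1).add hZmom)
      (ae_of_all _ fun ω => by simpa using abs_cube_le_one_add_pow4 (Z ω))
    rw [Real.norm_eq_abs] at this
    calc |M3| ≤ ∫ ω, (1 + (Z ω) ^ 4) ∂P := this
      _ = 1 + M4 := by
          rw [integral_add (integrable_const 1) hZmom, integral_const]; simp [hM4]
  set A := 1 + M4 with hA
  have hA1 : 1 ≤ A := by rw [hA]; linarith
  refine ⟨400 * A, by linarith, min (min p (1 - p) / 2) (1 / 2), ⟨?_, ?_⟩, ?_⟩
  · have h1 : 0 < min p (1 - p) := lt_min hp0 (by linarith)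
    exact lt_min (by linarith) (by norm_num)
  · have h1 : 0 < min p (1 - p) := lt_min hp0 (by linarith)
    calc min (min p (1 - p) / 2) (1 / 2) ≤ min p (1 - p) / 2 := min_le_left _ _
      _ < min p (1 - p) := by linarith
  intro δ hδ η β μ hη hβ hμ
  obtain ⟨hδ0, hδle⟩ := hδ
  have hδhalf : δ ≤ 1 / 2 := hδle.trans (min_le_right _ _)
  have hδ1 : δ ≤ 1 := by linarith
  have hδp : δ ≤ p / 2 := by
    have h0 := hδle.trans (min_le_left _ _)
    have h2 : min p (1 - p) ≤ p := min_le_left _ _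
    linarith
  have hδq : δ ≤ (1 - p) / 2 := by
    have h0 := hδle.trans (min_le_left _ _)
    have h2 : min p (1 - p) ≤ 1 - p := min_le_right _ _
    linarith
  obtain ⟨hηl, hηu⟩ := abs_le.mp hη
  have hρ0 : 0 < p + η := by linarith
  have hρ1 : p + η < 1 := by linarith
  set al := Real.log ((p + η) / (1 - (p + η))) with hal
  have hqal : qsig al = 1 - (p + η) := by
    have hfrac : 0 < (p + η) / (1 - (p + η)) := div_pos hρ0 (by linarith)
    rw [hal]
    unfold qsig
    rw [Real.exp_log hfrac]
    have hne : (1:ℝ) - (p + η) ≠ 0 := ne_of_gt (by linarith)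
    rw [show 1 + (p + η) / (1 - (p + η)) = 1 / (1 - (p + η)) by
      rw [eq_div_iff hne, add_mul, one_mul, div_mul_cancel₀ _ hne]; ring]
    rw [one_div, inv_inv]
  have ei1 : (∫ ω, (μ + Z ω) * (1 + Real.exp (al + β * μ + β * Z ω))⁻¹ ∂P)
      = ∫ ω, (μ + Z ω) * qsig (al + β * (μ + Z ω)) ∂P := by
    apply integral_congr_ae
    refine ae_of_all _ fun ω => ?_
    simp only [qsig]
    rw [mul_add β μ (Z ω), ← add_assoc]
  have ei2 : (∫ ω, Z ω * (1 + Real.exp (al + β * Z ω))⁻¹ ∂P)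
      = ∫ ω, (0 + Z ω) * qsig (al + β * (0 + Z ω)) ∂P := by
    apply integral_congr_ae
    refine ae_of_all _ fun ω => ?_
    simp only [qsig, zero_add]
  rw [ei1, ei2]
  set I1 := ∫ ω, (μ + Z ω) * qsig (al + β * (μ + Z ω)) ∂P with hI1
  set I2 := ∫ ω, (0 + Z ω) * qsig (al + β * (0 + Z ω)) ∂P with hI2
  have h1 := expand_int P Z hZmeas hZmom hZmean μ al β
  have h2 := expand_int P Z hZmeas hZmom hZmean 0 al β
  rw [← hM2, ← hM3, ← hM4, ← hI1, hqal] at h1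
  rw [← hM2, ← hM3, ← hM4, ← hI2, hqal] at h2
  set ρ := p + η with hρ
  set J1 := (1 - ρ) * μ + ((1 - ρ) ^ 2 - (1 - ρ)) * β * (μ ^ 2 + M2)
      + (2 * (1 - ρ) - 1) * ((1 - ρ) ^ 2 - (1 - ρ)) * β ^ 2 / 2
          * (μ ^ 3 + 3 * μ * M2 + M3) with hJ1
  set J2 := (1 - ρ) * 0 + ((1 - ρ) ^ 2 - (1 - ρ)) * β * ((0:ℝ) ^ 2 + M2)
      + (2 * (1 - ρ) - 1) * ((1 - ρ) ^ 2 - (1 - ρ)) * β ^ 2 / 2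
          * ((0:ℝ) ^ 3 + 3 * 0 * M2 + M3) with hJ2
  have h1' : |I1 - J1| ≤ 104 * |β| ^ 3 * (μ ^ 4 + M4) := h1
  have h2' : |I2 - J2| ≤ 104 * |β| ^ 3 * ((0:ℝ) ^ 4 + M4) := h2
  clear_value M2 M3 M4 A al I1 I2 ρ J1 J2
  clear h1 h2 ei1 ei2 hqal hZmom hZmean hZmeas hM2 hM3 hM4
  have hβ3 : |β| ^ 3 ≤ δ ^ 3 := pow_le_pow_left₀ (abs_nonneg β) hβ 3
  have hδ3nn : (0:ℝ) ≤ δ ^ 3 := by positivity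
  have hμ4 : μ ^ 4 ≤ 1 := by
    have h0 : |μ| ^ 4 ≤ 1 := pow_le_one₀ (abs_nonneg μ) (hμ.trans hδ1)
    calc μ ^ 4 = |μ| ^ 4 := by rw [← abs_pow, abs_of_nonneg (by positivity)]
      _ ≤ 1 := h0
  have hE1 : |I1 - J1| ≤ 104 * A * δ ^ 3 := by
    calc |I1 - J1| ≤ 104 * |β| ^ 3 * (μ ^ 4 + M4) := h1'
      _ ≤ 104 * δ ^ 3 * A := by
          apply mul_le_mul (by linarith [hβ3]) (by rw [hA]; linarith)
            (by positivity) (by positivity)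
      _ = 104 * A * δ ^ 3 := by ring
  have hE2 : |I2 - J2| ≤ 104 * A * δ ^ 3 := by
    calc |I2 - J2| ≤ 104 * |β| ^ 3 * ((0:ℝ) ^ 4 + M4) := h2'
      _ ≤ 104 * δ ^ 3 * A := by
          apply mul_le_mul (by linarith [hβ3]) (by rw [hA]; norm_num)
            (by positivity) (by positivity)
      _ = 104 * A * δ ^ 3 := by ring
  set R := p * (ρ * (1 - ρ)) * β * μ ^ 2 - η ^ 2 * β * M2
      - η * (-3 * p ^ 2 - 3 * p * η - η ^ 2 + 3 * p + 3 / 2 * η - 1 / 2) * β ^ 2 * M3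
      - p * (ρ * (1 - ρ) * (2 * ρ - 1) / 2) * β ^ 2 * (μ ^ 3 + 3 * μ * M2) with hR
  have hdecomp : (-p * I1 - (1 - p) * I2)
      - (-(p * (1 - p)) * μ + η * p * μ + (p * (1 - p) + (1 - 2 * p) * η) * β * M2
          - p * (1 - p) * (p - 1 / 2) * β ^ 2 * M3)
      = (-p) * (I1 - J1) + (-(1 - p)) * (I2 - J2) + R := by
    rw [hR, hJ1, hJ2, hρ]
    ring
  rw [hdecomp]
  -- now bound R
  have hρab : |ρ * (1 - ρ)| ≤ 1 := by
    rw [abs_mul, abs_of_pos hρ0, abs_of_pos (by rw [hρ]; linarith : (0:ℝ) < 1 - ρ)]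
    rw [hρ]; nlinarith only [hρ0, hρ1, sq_nonneg (p + η)]
  have hμ2 : |μ ^ 2| ≤ δ ^ 2 := by
    rw [abs_pow]; exact pow_le_pow_left₀ (abs_nonneg μ) hμ 2
  have hβ2 : |β ^ 2| ≤ δ ^ 2 := by
    rw [abs_pow]; exact pow_le_pow_left₀ (abs_nonneg β) hβ 2
  have hη2 : |η ^ 2| ≤ δ ^ 2 := by
    rw [abs_pow]; exact pow_le_pow_left₀ (abs_nonneg η) hη 2
  have hpabs : |p| ≤ 1 := by rw [abs_of_pos hp0]; linarith
  have hM2A' : |M2| ≤ A := hM2A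
  have hM3A' : |M3| ≤ A := hM3A
  have t1 : |p * (ρ * (1 - ρ)) * β * μ ^ 2| ≤ 1 * 1 * δ * δ ^ 2 :=
    mul_abs_le (mul_abs_le (mul_abs_le hpabs hρab) hβ) hμ2
  have t2 : |η ^ 2 * β * M2| ≤ δ ^ 2 * δ * A :=
    mul_abs_le (mul_abs_le hη2 hβ) hM2A'
  have hinner : |-3 * p ^ 2 - 3 * p * η - η ^ 2 + 3 * p + 3 / 2 * η - 1 / 2| ≤ 12 :=
    inner_bound hp0 hp1 (by linarith) (by linarith)
  have t3 : |η * (-3 * p ^ 2 - 3 * p * η - η ^ 2 + 3 * p + 3 / 2 * η - 1 / 2) * β ^ 2 * M3|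
      ≤ δ * 12 * δ ^ 2 * A :=
    mul_abs_le (mul_abs_le (mul_abs_le hη hinner) hβ2) hM3A'
  have hcube : |μ ^ 3 + 3 * μ * M2| ≤ 4 * A * δ := by
    have e1 : |μ ^ 3| ≤ δ ^ 3 := by
      rw [abs_pow]; exact pow_le_pow_left₀ (abs_nonneg μ) hμ 3
    have e2 : |3 * μ * M2| ≤ 3 * δ * A := by
      refine mul_abs_le (mul_abs_le ?_ hμ) hM2A'
      norm_num
    have e3 : δ ^ 3 ≤ δ := by
      have hsq : δ ^ 2 ≤ 1 := pow_le_one₀ hδ0.le hδ1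
      calc δ ^ 3 = δ * δ ^ 2 := by ring
        _ ≤ δ * 1 := mul_le_mul_of_nonneg_left hsq hδ0.le
        _ = δ := mul_one δ
    calc |μ ^ 3 + 3 * μ * M2| ≤ |μ ^ 3| + |3 * μ * M2| := abs_add_le _ _
      _ ≤ δ ^ 3 + 3 * δ * A := by linarith
      _ ≤ 4 * A * δ := by
          have h1 : δ ≤ A * δ := le_mul_of_one_le_left hδ0.le hA1
          have h2 : 3 * δ * A = 3 * (A * δ) := by ring
          have h3 : 4 * A * δ = 4 * (A * δ) := by ring
          linarith
  have hmid : |ρ * (1 - ρ) * (2 * ρ - 1) / 2| ≤ 1 / 2 := by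
    rw [abs_div, show |(2:ℝ)| = 2 by norm_num, div_le_div_iff_of_pos_right (by norm_num)]
    calc |ρ * (1 - ρ) * (2 * ρ - 1)| ≤ 1 * 1 := by
          refine mul_abs_le hρab ?_
          rw [abs_le, hρ]; constructor <;> linarith
      _ = 1 := one_mul 1
  have t4 : |p * (ρ * (1 - ρ) * (2 * ρ - 1) / 2) * β ^ 2 * (μ ^ 3 + 3 * μ * M2)|
      ≤ 1 * (1 / 2) * δ ^ 2 * (4 * A * δ) :=
    mul_abs_le (mul_abs_le (mul_abs_le hpabs hmid) hβ2) hcube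
  have t1' : |p * (ρ * (1 - ρ)) * β * μ ^ 2| ≤ δ ^ 3 := t1.trans (by ring_nf; rfl)
  have t2' : |η ^ 2 * β * M2| ≤ A * δ ^ 3 := t2.trans (le_of_eq (by ring))
  have t3' : |η * (-3 * p ^ 2 - 3 * p * η - η ^ 2 + 3 * p + 3 / 2 * η - 1 / 2) * β ^ 2 * M3|
      ≤ 12 * (A * δ ^ 3) := t3.trans (le_of_eq (by ring))
  have t4' : |p * (ρ * (1 - ρ) * (2 * ρ - 1) / 2) * β ^ 2 * (μ ^ 3 + 3 * μ * M2)|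
      ≤ 2 * (A * δ ^ 3) := t4.trans (le_of_eq (by ring))
  have hδ3A : δ ^ 3 ≤ A * δ ^ 3 := le_mul_of_one_le_left hδ3nn hA1
  have hRb : |R| ≤ 16 * A * δ ^ 3 := by
    have hsplit : R = p * (ρ * (1 - ρ)) * β * μ ^ 2 + (-(η ^ 2 * β * M2))
        + (-(η * (-3 * p ^ 2 - 3 * p * η - η ^ 2 + 3 * p + 3 / 2 * η - 1 / 2) * β ^ 2 * M3))
        + (-(p * (ρ * (1 - ρ) * (2 * ρ - 1) / 2) * β ^ 2 * (μ ^ 3 + 3 * μ * M2))) := by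
      rw [hR]; ring
    rw [hsplit]
    refine (abs_add4 _ _ _ _).trans ?_
    rw [abs_neg, abs_neg, abs_neg]
    have : (16 : ℝ) * A * δ ^ 3 = 16 * (A * δ ^ 3) := by ring
    rw [this]
    linarith [t1', t2', t3', t4', hδ3A]
  calc |(-p) * (I1 - J1) + (-(1 - p)) * (I2 - J2) + R|
      ≤ |(-p) * (I1 - J1)| + |(-(1 - p)) * (I2 - J2)| + |R| :=
        (abs_add_le _ _).trans (add_le_add_left (abs_add_le _ _) _)
    _ ≤ 1 * (104 * A * δ ^ 3) + 1 * (104 * A * δ ^ 3) + 16 * A * δ ^ 3 := by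
        have b1 : |(-p) * (I1 - J1)| ≤ 1 * (104 * A * δ ^ 3) :=
          mul_abs_le (by rw [abs_neg]; exact hpabs) hE1
        have b2 : |(-(1 - p)) * (I2 - J2)| ≤ 1 * (104 * A * δ ^ 3) := by
          refine mul_abs_le ?_ hE2
          rw [abs_neg]
          rw [abs_of_pos (show (0:ℝ) < 1 - p by linarith)]
          linarith
        exact add_le_add (add_le_add b1 b2) hRb
    _ ≤ 400 * A * δ ^ 3 := by
        have h0 : 0 ≤ A * δ ^ 3 := mul_nonneg (by linarith) hδ3nn
        have he : (400 : ℝ) * A * δ ^ 3 = 400 * (A * δ ^ 3) := by ring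
        have he2 : (104 : ℝ) * A * δ ^ 3 = 104 * (A * δ ^ 3) := by ring
        have he3 : (16 : ℝ) * A * δ ^ 3 = 16 * (A * δ ^ 3) := by ring
        rw [he, he2, he3]
        linarith
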